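/- Suppose that J(y) is skew-symmetric for every y, that div J = 0 in the sense that Σ_j ∂_{y_j} J_{ij}(y) = 0 for every index i and every y ∈ ℝⁿ, and that J(y)(∇S(y)) = 0 for every y. Then the vector field y ↦ e^{S(y)}·J(y)(∇E(y)) is divergence-free: Σ_i ∂_{y_i}(e^{S(y)}·(J(y)∇E(y))_i) = 0 for all y ∈ ℝⁿ. -/

import Mathlib

/-- Coordinates of the gradient are directional derivatives. -/
lemma gradient_coord {n : ℕ} (f : EuclideanSpace ℝ (Fin n) → ℝ)
    (z : EuclideanSpace ℝ (Fin n)) (j : Fin n) :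
    gradient f z j = fderiv ℝ f z (EuclideanSpace.single j 1) := by
  have h : gradient f z j
      = (inner ℝ (gradient f z) (EuclideanSpace.single j (1:ℝ)) : ℝ) := by
    rw [EuclideanSpace.inner_single_right]; simp
  rw [h, gradient, InnerProductSpace.toDual_symm_apply]

/-- Let `S : ℝⁿ → ℝ` be `C¹`, `E : ℝⁿ → ℝ` be `C²`, and
`J : ℝⁿ → ℝ^{n×n}` be `C¹` (entrywise).  Suppose `J(y)` is skew-symmetric for every
`y`, `div J = 0` in the sense `Σ_j ∂_{y_j} J_{ij}(y) = 0` for every `i` and `y`, and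
`J(y)(∇S(y)) = 0` for every `y`.  Then the vector field
`y ↦ e^{S(y)}·J(y)(∇E(y))` is divergence-free:
`Σ_i ∂_{y_i}(e^{S(y)}·(J(y)∇E(y))_i) = 0` for all `y`. -/
theorem generic_hamiltonian_field_divergence_free
    (n : ℕ)
    (S : EuclideanSpace ℝ (Fin n) → ℝ) (hS : ContDiff ℝ 1 S)
    (E : EuclideanSpace ℝ (Fin n) → ℝ) (hE : ContDiff ℝ 2 E)
    (J : EuclideanSpace ℝ (Fin n) → Fin n → Fin n → ℝ)
    (hJ : ∀ i j : Fin n, ContDiff ℝ 1 (fun y => J y i j))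
    (hskew : ∀ (y : EuclideanSpace ℝ (Fin n)) (i j : Fin n), J y i j = -J y j i)
    (hdiv : ∀ (i : Fin n) (y : EuclideanSpace ℝ (Fin n)),
      ∑ j : Fin n, fderiv ℝ (fun y => J y i j) y (EuclideanSpace.single j 1) = 0)
    (hJS : ∀ (i : Fin n) (y : EuclideanSpace ℝ (Fin n)),
      ∑ j : Fin n, J y i j * gradient S y j = 0) :
    ∀ y : EuclideanSpace ℝ (Fin n),
      ∑ i : Fin n, fderiv ℝ
        (fun y => Real.exp (S y) * ∑ j : Fin n, J y i j * gradient E y j)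
        y (EuclideanSpace.single i 1) = 0 := by
  intro y
  classical
  -- abbreviation for basis vectors
  set e : Fin n → EuclideanSpace ℝ (Fin n) := fun i => EuclideanSpace.single i 1 with he
  -- replace `gradient E` by directional derivatives
  have hgE : ∀ (z : EuclideanSpace ℝ (Fin n)) (j : Fin n),
      gradient E z j = fderiv ℝ E z (e j) := fun z j => gradient_coord E z j
  simp only [hgE]
  -- basic differentiability facts
  have hSd : DifferentiableAt ℝ S y := (hS.differentiable one_ne_zero) y
  have hexp : DifferentiableAt ℝ (fun z => Real.exp (S z)) y := hSd.exp
  have hJd : ∀ i j, DifferentiableAt ℝ (fun z => J z i j) y :=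
    fun i j => ((hJ i j).differentiable one_ne_zero) y
  have hfE : ContDiff ℝ 1 (fderiv ℝ E) := hE.fderiv_right (by norm_num)
  have hDd : ∀ j, DifferentiableAt ℝ (fun z => fderiv ℝ E z (e j)) y := by
    intro j
    exact ((hfE.differentiable one_ne_zero) y).clm_apply (differentiableAt_const _)
  have hGd : ∀ i, DifferentiableAt ℝ
      (fun z => ∑ j : Fin n, J z i j * fderiv ℝ E z (e j)) y := by
    intro i
    exact DifferentiableAt.fun_sum fun j _ => (hJd i j).mul (hDd j)
  -- second derivative (Hessian) entries and their symmetry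
  set H : Fin n → Fin n → ℝ :=
    fun i j => fderiv ℝ (fun z => fderiv ℝ E z (e j)) y (e i) with hH
  have hswap : ∀ v w, fderiv ℝ (fun z => fderiv ℝ E z v) y w
      = fderiv ℝ (fderiv ℝ E) y w v := by
    intro v w
    rw [fderiv_clm_apply ((hfE.differentiable one_ne_zero) y) (differentiableAt_const v)]
    simp
  have hHsymm : ∀ i j, H i j = H j i := by
    intro i j
    simp only [hH]
    rw [hswap, hswap]
    exact (hE.contDiffAt.isSymmSndFDerivAt (by simp)).eq _ _
  -- compute each term of the divergence
  have key : ∀ i : Fin n,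
      fderiv ℝ (fun z => Real.exp (S z) * ∑ j : Fin n, J z i j * fderiv ℝ E z (e j)) y (e i)
      = Real.exp (S y) * ((fderiv ℝ S y (e i)) * ∑ j : Fin n, J y i j * fderiv ℝ E y (e j)
          + ∑ j : Fin n, (fderiv ℝ (fun z => J z i j) y (e i) * fderiv ℝ E y (e j)
              + J y i j * H i j)) := by
    intro i
    have hterm : ∀ j : Fin n,
        fderiv ℝ (fun z => J z i j * fderiv ℝ E z (e j)) y (e i)
        = fderiv ℝ (fun z => J z i j) y (e i) * fderiv ℝ E y (e j) + J y i j * H i j := by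
      intro j
      rw [fderiv_fun_mul (hJd i j) (hDd j)]
      simp only [hH, ContinuousLinearMap.add_apply, ContinuousLinearMap.smul_apply,
        smul_eq_mul]
      ring
    rw [fderiv_fun_mul hexp (hGd i), fderiv_exp hSd,
      fderiv_fun_sum (fun j _ => (hJd i j).fun_mul (hDd j))]
    simp only [ContinuousLinearMap.add_apply, ContinuousLinearMap.smul_apply, smul_eq_mul,
      ContinuousLinearMap.coe_sum', Finset.sum_apply]
    simp only [hterm]
    ring
  have he' : ∀ i : Fin n, EuclideanSpace.single i (1:ℝ) = e i := fun _ => rfl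
  simp only [he']
  simp only [key]
  rw [← Finset.mul_sum]
  -- it remains to show the bracket sums to zero
  have hzero :
      ∑ i : Fin n, ((fderiv ℝ S y (e i)) * ∑ j : Fin n, J y i j * fderiv ℝ E y (e j)
          + ∑ j : Fin n, (fderiv ℝ (fun z => J z i j) y (e i) * fderiv ℝ E y (e j)
              + J y i j * H i j)) = 0 := by
    have hgS : ∀ j, gradient S y j = fderiv ℝ S y (e j) := fun j => gradient_coord S y j
    -- term A: uses J ∇S = 0 and skew-symmetry
    have hA : ∑ i : Fin n, (fderiv ℝ S y (e i)) * ∑ j : Fin n, J y i j * fderiv ℝ E y (e j)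
        = 0 := by
      have hcol : ∀ j : Fin n, ∑ i : Fin n, J y i j * fderiv ℝ S y (e i) = 0 := by
        intro j
        have := hJS j y
        simp only [hgS] at this
        calc ∑ i : Fin n, J y i j * fderiv ℝ S y (e i)
            = -∑ i : Fin n, J y j i * fderiv ℝ S y (e i) := by
              rw [← Finset.sum_neg_distrib]
              exact Finset.sum_congr rfl fun i _ => by rw [hskew y i j]; ring
          _ = 0 := by rw [this]; ring
      calc ∑ i : Fin n, (fderiv ℝ S y (e i)) * ∑ j : Fin n, J y i j * fderiv ℝ E y (e j)
          = ∑ i : Fin n, ∑ j : Fin n,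
              (J y i j * fderiv ℝ S y (e i)) * fderiv ℝ E y (e j) := by
            refine Finset.sum_congr rfl fun i _ => ?_
            rw [Finset.mul_sum]
            exact Finset.sum_congr rfl fun j _ => by ring
        _ = ∑ j : Fin n, (∑ i : Fin n, J y i j * fderiv ℝ S y (e i)) * fderiv ℝ E y (e j) := by
            rw [Finset.sum_comm]
            exact Finset.sum_congr rfl fun j _ => by rw [Finset.sum_mul]
        _ = 0 := by simp [hcol]
    -- term B: uses div J = 0 and skew-symmetry
    have hB : ∑ i : Fin n, ∑ j : Fin n,
        fderiv ℝ (fun z => J z i j) y (e i) * fderiv ℝ E y (e j) = 0 := by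
      have hcol : ∀ j : Fin n, ∑ i : Fin n, fderiv ℝ (fun z => J z i j) y (e i) = 0 := by
        intro j
        have hfun : ∀ i : Fin n, (fun z => J z i j) = (fun z => -J z j i) :=
          fun i => funext fun z => hskew z i j
        calc ∑ i : Fin n, fderiv ℝ (fun z => J z i j) y (e i)
            = ∑ i : Fin n, -fderiv ℝ (fun z => J z j i) y (e i) := by
              refine Finset.sum_congr rfl fun i _ => ?_
              rw [hfun i, fderiv_fun_neg]
              simp
          _ = -∑ i : Fin n, fderiv ℝ (fun z => J z j i) y (e i) := by
              rw [Finset.sum_neg_distrib]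
          _ = 0 := by rw [hdiv j y]; ring
      calc ∑ i : Fin n, ∑ j : Fin n,
            fderiv ℝ (fun z => J z i j) y (e i) * fderiv ℝ E y (e j)
          = ∑ j : Fin n, (∑ i : Fin n, fderiv ℝ (fun z => J z i j) y (e i))
              * fderiv ℝ E y (e j) := by
            rw [Finset.sum_comm]
            exact Finset.sum_congr rfl fun j _ => by rw [Finset.sum_mul]
        _ = 0 := by simp [hcol]
    -- term C: contraction of skew J with symmetric Hessian
    have hC : ∑ i : Fin n, ∑ j : Fin n, J y i j * H i j = 0 := by
      have h1 : ∑ i : Fin n, ∑ j : Fin n, J y i j * H i j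
          = -∑ i : Fin n, ∑ j : Fin n, J y i j * H i j := by
        calc ∑ i : Fin n, ∑ j : Fin n, J y i j * H i j
            = ∑ j : Fin n, ∑ i : Fin n, J y i j * H i j := Finset.sum_comm
          _ = ∑ i : Fin n, ∑ j : Fin n, J y j i * H j i := rfl
          _ = ∑ i : Fin n, ∑ j : Fin n, -(J y i j * H i j) := by
              refine Finset.sum_congr rfl fun i _ => Finset.sum_congr rfl fun j _ => ?_
              rw [hskew y j i, hHsymm j i]; ring
          _ = -∑ i : Fin n, ∑ j : Fin n, J y i j * H i j := by
              simp [Finset.sum_neg_distrib]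
      linarith
    simp only [Finset.sum_add_distrib]
    rw [hA, hB, hC]
    ring
  rw [hzero, mul_zero]
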